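/- Let f: Ω → ℝⁿ be continuous, open, and discrete on an open set Ω, and suppose N := ess-sup over y ∈ f(Ω) of the counting function N(f, Ω, y) = #(f⁻¹(y) ∩ Ω) is finite. Then sup_{y ∈ ℝⁿ} N(f, Ω, y) = N, i.e., every point has at most N preimages. -/

import Mathlib

open MeasureTheory Metric Set ENNReal

theorem stmt17 {n : ℕ} (Ω : Set (EuclideanSpace ℝ (Fin n))) (hΩ : IsOpen Ω)
    (f : EuclideanSpace ℝ (Fin n) → EuclideanSpace ℝ (Fin n))
    (hcont : ContinuousOn f Ω)
    (hopen : ∀ U ⊆ Ω, IsOpen U → IsOpen (f '' U))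
    -- discreteness: every fiber is a discrete subset of Ω
    (hdisc : ∀ (y : EuclideanSpace ℝ (Fin n)), ∀ x ∈ Ω ∩ f ⁻¹' {y},
      ∃ V ∈ nhds x, V ∩ (Ω ∩ f ⁻¹' {y}) = {x})
    (N : ℕ)
    -- the essential supremum of the counting function over `f '' Ω` is at most `N`
    (hN : ∀ᵐ y, y ∈ f '' Ω →
      (Ω ∩ f ⁻¹' {y}).Finite ∧ (Ω ∩ f ⁻¹' {y}).ncard ≤ N) :
    ∀ y : EuclideanSpace ℝ (Fin n),
      (Ω ∩ f ⁻¹' {y}).Finite ∧ (Ω ∩ f ⁻¹' {y}).ncard ≤ N := by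
  -- Main claim: no finite subset of a fiber can have N+1 elements.
  have key : ∀ y : EuclideanSpace ℝ (Fin n), ∀ T ⊆ Ω ∩ f ⁻¹' {y},
      T.Finite → T.ncard ≠ N + 1 := by
    intro y T hTsub hTfin hTcard
    have hTΩ : T ⊆ Ω := hTsub.trans (inter_subset_left)
    have hTfib : ∀ x ∈ T, f x = y := fun x hx => (hTsub hx).2
    -- choose radii: balls inside Ω, pairwise separated
    have hr : ∀ x ∈ T, ∃ r : ℝ, 0 < r ∧ ball x r ⊆ Ω ∧
        ∀ x' ∈ T, x' ≠ x → r ≤ dist x x' / 2 := by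
      intro x hx
      obtain ⟨ε, hε, hεΩ⟩ := Metric.isOpen_iff.1 hΩ x (hTΩ hx)
      by_cases hD : (T \ {x}).Nonempty
      · have hDfin : (T \ {x}).Finite := hTfin.diff
        have hDclosed : IsClosed (T \ {x}) := hDfin.isClosed
        have hxD : x ∉ T \ {x} := fun h => h.2 rfl
        have hd : 0 < infDist x (T \ {x}) :=
          (hDclosed.notMem_iff_infDist_pos hD).1 hxD
        refine ⟨min ε (infDist x (T \ {x}) / 2), lt_min hε (by linarith), ?_, ?_⟩
        · exact (ball_subset_ball (min_le_left _ _)).trans hεΩ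
        · intro x' hx' hne
          have : infDist x (T \ {x}) ≤ dist x x' :=
            infDist_le_dist_of_mem (Set.mem_diff_singleton.2 ⟨hx', hne⟩)
          calc min ε (infDist x (T \ {x}) / 2) ≤ infDist x (T \ {x}) / 2 :=
                min_le_right _ _
            _ ≤ dist x x' / 2 := by linarith
      · refine ⟨ε, hε, hεΩ, fun x' hx' hne => absurd ⟨x', Set.mem_diff_singleton.2 ⟨hx', hne⟩⟩ hD⟩
    choose! r hr0 hrΩ hrsep using hr
    -- balls are pairwise disjoint
    have hdisj : ∀ x ∈ T, ∀ x' ∈ T, x ≠ x' →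
        Disjoint (ball x (r x)) (ball x' (r x')) := by
      intro x hx x' hx' hne
      rw [Set.disjoint_left]
      intro z hz hz'
      have h1 : r x ≤ dist x x' / 2 := hrsep x hx x' hx' hne.symm
      have h2 : r x' ≤ dist x' x / 2 := hrsep x' hx' x hx hne
      have : dist x x' ≤ dist z x + dist z x' := dist_triangle_left _ _ _
      rw [dist_comm x' x] at h2
      have hz1 : dist z x < r x := mem_ball.1 hz
      have hz2 : dist z x' < r x' := mem_ball.1 hz'
      linarith
    -- the intersection of images of the balls
    set U : Set (EuclideanSpace ℝ (Fin n)) := ⋂ x ∈ T, f '' ball x (r x) with hU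
    have hUopen : IsOpen U := hTfin.isOpen_biInter fun x hx =>
      hopen _ (hrΩ x hx) isOpen_ball
    have hyU : y ∈ U := by
      refine Set.mem_biInter fun x hx => ⟨x, mem_ball_self (hr0 x hx), hTfib x hx⟩
    have hμU : (0 : ℝ≥0∞) < volume U := hUopen.measure_pos volume ⟨y, hyU⟩
    -- find a good point z in U
    have : ∃ z ∈ U, z ∈ f '' Ω →
        (Ω ∩ f ⁻¹' {z}).Finite ∧ (Ω ∩ f ⁻¹' {z}).ncard ≤ N := by
      by_contra h
      have hsub : U ⊆ {z | ¬ (z ∈ f '' Ω →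
          (Ω ∩ f ⁻¹' {z}).Finite ∧ (Ω ∩ f ⁻¹' {z}).ncard ≤ N)} := by
        intro z hz hP
        exact h ⟨z, hz, hP⟩
      have := measure_mono_null hsub hN
      exact hμU.ne' this
    obtain ⟨z, hzU, hz⟩ := this
    -- z has a preimage in each ball
    have hw : ∀ x ∈ T, ∃ w, w ∈ ball x (r x) ∧ f w = z := by
      intro x hx
      have := Set.mem_iInter₂.1 hzU x hx
      obtain ⟨w, hw1, hw2⟩ := this
      exact ⟨w, hw1, hw2⟩
    choose! w hw1 hw2 using hw
    have hTne : T.Nonempty := by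
      rw [Set.nonempty_iff_ne_empty]
      intro h
      rw [h, Set.ncard_empty] at hTcard
      omega
    obtain ⟨x₀, hx₀⟩ := hTne
    have hzim : z ∈ f '' Ω :=
      ⟨w x₀, hrΩ x₀ hx₀ (hw1 x₀ hx₀), hw2 x₀ hx₀⟩
    obtain ⟨hfin, hcard⟩ := hz hzim
    -- w maps T injectively into the fiber of z
    have hmaps : ∀ x ∈ T, w x ∈ Ω ∩ f ⁻¹' {z} := fun x hx =>
      ⟨hrΩ x hx (hw1 x hx), hw2 x hx⟩
    have hinj : Set.InjOn w T := by
      intro a ha b hb hab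
      by_contra hne
      have := hdisj a ha b hb hne
      exact (Set.disjoint_left.1 this (hw1 a ha)) (hab ▸ hw1 b hb)
    have := Set.ncard_le_ncard_of_injOn w hmaps hinj hfin
    omega
  intro y
  have hfin : (Ω ∩ f ⁻¹' {y}).Finite := by
    by_contra hinf
    have hinf' : (Ω ∩ f ⁻¹' {y}).Infinite := hinf
    obtain ⟨T, hT, hTfin, hTcard⟩ := hinf'.exists_subset_ncard_eq (N + 1)
    exact key y T hT hTfin hTcard
  refine ⟨hfin, ?_⟩
  by_contra hlt
  push_neg at hlt
  obtain ⟨T, hT, hTcard⟩ := Set.exists_subset_card_eq (show N + 1 ≤ _ from hlt)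
  exact key y T hT (hfin.subset hT) hTcard
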